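/- Let C be a triangulated category and D a full additive subcategory. If (X, μ⁻¹(X; D)) is a D-mutation pair in the sense of Iyama–Yoshino, with D ⊆ X ⊆ ^⊥(D[1]), then in the subfactor triangulated category ^⊥(D[1])/D the image of μ⁻¹(X; D) = (D * X[1]) ∩ ^⊥(D[1]) equals the image of X shifted by the induced shift functor ⟨1⟩: μ⁻¹(X; D)/D = (X/D)⟨1⟩. -/

import Mathlib

open CategoryTheory CategoryTheory.Limits CategoryTheory.Pretriangulated

variable {k : Type*} [Field k]
variable {C : Type*} [Category C] [Preadditive C] [Linear k C] [HasZeroObject C]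
  [HasShift C ℤ] [∀ n : ℤ, (CategoryTheory.shiftFunctor C n).Additive] [Pretriangulated C]

def star (X Y : Set C) : Set C :=
  {Z | ∃ (A B : C) (_ : A ∈ X) (_ : B ∈ Y) (f : A ⟶ Z) (g : Z ⟶ B)
    (h : B ⟶ A⟦(1 : ℤ)⟧), Triangle.mk f g h ∈ distTriang C}

def shiftSet (S : Set C) (n : ℤ) : Set C :=
  {Z | ∃ A ∈ S, Nonempty (Z ≅ A⟦n⟧)}

structure SubClosed [HasBinaryBiproducts C] (S : Set C) : Prop where
  iso : ∀ {A B : C}, (A ≅ B) → A ∈ S → B ∈ S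
  sum : ∀ {A B : C}, A ∈ S → B ∈ S → (A ⊞ B) ∈ S
  summand : ∀ {A B : C}, (A ⊞ B) ∈ S → A ∈ S

def IsLeftApprox (D : Set C) {A DA : C} (f : A ⟶ DA) : Prop :=
  DA ∈ D ∧ ∀ D' ∈ D, ∀ u : A ⟶ D', ∃ t : DA ⟶ D', f ≫ t = u

def IsRightApprox (D : Set C) {DA B : C} (g : DA ⟶ B) : Prop :=
  DA ∈ D ∧ ∀ D' ∈ D, ∀ u : D' ⟶ B, ∃ t : D' ⟶ DA, t ≫ g = u

/-- `f` factors through an object of `D`. -/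
def QFactor (D : Set C) {A B : C} (f : A ⟶ B) : Prop :=
  ∃ D₀ ∈ D, ∃ u : A ⟶ D₀, ∃ v : D₀ ⟶ B, u ≫ v = f

/-- `A` and `B` are isomorphic in the quotient category `C/D`. -/
def QIso (D : Set C) (A B : C) : Prop :=
  ∃ (u : A ⟶ B) (v : B ⟶ A), QFactor D (u ≫ v - 𝟙 A) ∧ QFactor D (v ≫ u - 𝟙 B)

/-- Auxiliary: if all maps `A ⟶ B⟦1⟧` vanish, then all maps `A⟦-1⟧ ⟶ B` vanish. -/
lemma shift_neg_hom_zero {A B : C} (h : ∀ f : A ⟶ B⟦(1 : ℤ)⟧, f = 0)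
    (w : A⟦(-1 : ℤ)⟧ ⟶ B) : w = 0 := by
  have h1 : ((shiftEquiv C (1 : ℤ)).counitIso.app A).inv ≫ w⟦(1 : ℤ)⟧' = 0 := h _
  have h2 : w⟦(1 : ℤ)⟧' = 0 := by
    exact (cancel_epi ((shiftEquiv C (1 : ℤ)).counitIso.app A).inv).mp (h1.trans comp_zero.symm)
  apply (shiftFunctor C (1 : ℤ)).map_injective
  rw [h2, Functor.map_zero]

/-- Auxiliary: Calabi-Yau duality transports vanishing of Hom spaces. -/
lemma cy_zero {A B : C} (e : (A ⟶ B⟦(1 : ℤ)⟧) ≃ₗ[k] Module.Dual k (B ⟶ A⟦(1 : ℤ)⟧))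
    (h : ∀ f : B ⟶ A⟦(1 : ℤ)⟧, f = 0) (g : A ⟶ B⟦(1 : ℤ)⟧) : g = 0 := by
  have he : e g = 0 := LinearMap.ext fun x => by simp [h x]
  exact e.map_eq_zero_iff.mp he

/-- Auxiliary: a set closed under isos, sums and summands contains retracts of its members. -/
lemma retract_mem [HasBinaryBiproducts C] {S : Set C} (hS : SubClosed S) {N M : C}
    (hM : M ∈ S) (α : N ⟶ M) (β : M ⟶ N) (hαβ : α ≫ β = 𝟙 N) : N ∈ S := by
  obtain ⟨Q, π, δ, hT⟩ := distinguished_cocone_triangle α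
  have hδ : δ = 0 := by
    have h1 : δ ≫ α⟦(1 : ℤ)⟧' = 0 := comp_distTriang_mor_zero₃₁ _ hT
    calc δ = δ ≫ α⟦(1 : ℤ)⟧' ≫ β⟦(1 : ℤ)⟧' := by
            rw [← CategoryTheory.Functor.map_comp, hαβ, CategoryTheory.Functor.map_id, Category.comp_id]
    _ = 0 := by rw [← Category.assoc, h1, zero_comp]
  obtain ⟨e, -, -⟩ := exists_iso_binaryBiproduct_of_distTriang _ hT hδ
  exact hS.summand (hS.iso e hM)

/-- with `Z = ⊥(D[1])` and `D ⊆ X ⊆ Z`, in the Iyama–Yoshino subfactor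
triangulated category `Z/D` the image of `μ⁻¹(X; D) = (D * X[1]) ∩ ⊥(D[1])` is the image
of `X` shifted by the induced shift `⟨1⟩`: an object `Z₀ ∈ Z` lies in `μ⁻¹(X; D)` iff it
is isomorphic in `Z/D` to an object `X'⟨1⟩` arising from a triangle
`X' → D_{X'} → X'⟨1⟩ → X'[1]` with `X' ∈ X` and `X' → D_{X'}` a left `D`-approximation. -/
theorem mutation_is_shift [HasBinaryBiproducts C]
    (homFin : ∀ A B : C, FiniteDimensional k (A ⟶ B))
    (CY : ∀ A B : C, Nonempty ((A ⟶ B⟦(1 : ℤ)⟧) ≃ₗ[k] Module.Dual k (B ⟶ A⟦(1 : ℤ)⟧)))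
    (D X : Set C) (hD : SubClosed D) (hX : SubClosed X)
    (hrigid : ∀ A ∈ D, ∀ B ∈ D, ∀ f : A ⟶ B⟦(1 : ℤ)⟧, f = 0)
    (hff : ∀ M : C, (∃ (DM : C) (f : M ⟶ DM), IsLeftApprox D f) ∧
      (∃ (DM : C) (g : DM ⟶ M), IsRightApprox D g))
    (hDX : D ⊆ X)
    (hXZ : ∀ A ∈ X, ∀ D₀ ∈ D, ∀ f : A ⟶ D₀⟦(1 : ℤ)⟧, f = 0)
    (Z₀ : C) (hZ₀ : ∀ D₀ ∈ D, ∀ f : Z₀ ⟶ D₀⟦(1 : ℤ)⟧, f = 0) :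
    Z₀ ∈ star D (shiftSet X 1) ↔
      ∃ X' ∈ X, ∃ (DX' W : C) (f : X' ⟶ DX') (g : DX' ⟶ W) (h : W ⟶ X'⟦(1 : ℤ)⟧),
        (Triangle.mk f g h ∈ distTriang C) ∧ IsLeftApprox D f ∧ QIso D W Z₀ := by
  constructor
  · -- Forward direction
    rintro ⟨A, B, hA, ⟨X', hX', ⟨eB⟩⟩, f₀, g₀, h₀, hdist⟩
    -- replace `B` by `X'⟦1⟧`
    have hT' : Triangle.mk f₀ (g₀ ≫ eB.hom) (eB.inv ≫ h₀) ∈ distTriang C := by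
      refine isomorphic_distinguished _ hdist _ ?_
      exact Triangle.isoMk _ _ (Iso.refl _) (Iso.refl _) eB.symm
        (by change f₀ ≫ 𝟙 Z₀ = 𝟙 A ≫ f₀; simp)
        (by change (g₀ ≫ eB.hom) ≫ eB.inv = 𝟙 Z₀ ≫ g₀; simp)
        (by change (eB.inv ≫ h₀) ≫ (𝟙 A)⟦(1 : ℤ)⟧' = eB.inv ≫ h₀; simp)
    set T2 := (Triangle.mk f₀ (g₀ ≫ eB.hom) (eB.inv ≫ h₀)).invRotate with hT2def
    have hT2 : T2 ∈ distTriang C := inv_rot_of_distTriang _ hT'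
    set u₁ : X' ≅ (X'⟦(1 : ℤ)⟧)⟦(-1 : ℤ)⟧ := (shiftEquiv C (1 : ℤ)).unitIso.app X' with hu₁
    set T'' : Triangle C :=
      Triangle.mk (u₁.hom ≫ T2.mor₁) T2.mor₂ (T2.mor₃ ≫ (u₁.inv)⟦(1 : ℤ)⟧') with hT''def
    have hT'' : T'' ∈ distTriang C := by
      refine isomorphic_distinguished _ hT2 _ ?_
      refine Triangle.isoMk _ _ u₁ (Iso.refl _) (Iso.refl _) (by exact Category.comp_id _)
        (by exact (Category.comp_id _).trans (Category.id_comp _).symm)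
        ?_
      dsimp [T'']
      exact ((Category.assoc _ _ _).trans ((congrArg (T2.mor₃ ≫ ·)
        ((shiftFunctor C (1 : ℤ)).mapIso u₁).inv_hom_id).trans (Category.comp_id _))).trans
        (Category.id_comp _).symm
    refine ⟨X', hX', A, Z₀, T''.mor₁, T''.mor₂, T''.mor₃, hT'', ⟨hA, ?_⟩,
      𝟙 Z₀, 𝟙 Z₀, ⟨A, hA, 0, 0, by simp⟩, ⟨A, hA, 0, 0, by simp⟩⟩
    -- left approximation property
    intro D'' hD'' m
    have hT₃ : T''.invRotate ∈ distTriang C := inv_rot_of_distTriang _ hT''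
    have hm : T''.invRotate.mor₁ ≫ m = 0 :=
      shift_neg_hom_zero (hZ₀ D'' hD'') (T''.invRotate.mor₁ ≫ m)
    obtain ⟨t, ht⟩ := Triangle.yoneda_exact₂ _ hT₃ m hm
    exact ⟨t, ht.symm⟩
  · -- Backward direction
    rintro ⟨X', hX', DX', W, f, g, h, hT1, ⟨hDX', happrox⟩, u, v, hQ1, hQ2⟩
    obtain ⟨D_Z, b, hbD, hb⟩ := (hff Z₀).2
    obtain ⟨Y', a, c, hT2⟩ := distinguished_cocone_triangle₁ b
    have hbc : b ≫ c = 0 := comp_distTriang_mor_zero₂₃ _ hT2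
    -- all maps from D to Y'⟦1⟧ vanish
    have HomDY1 : ∀ D' ∈ D, ∀ ξ : D' ⟶ Y'⟦(1 : ℤ)⟧, ξ = 0 := by
      intro D' hD' ξ
      have h0 : ξ ≫ (-(a⟦(1 : ℤ)⟧')) = 0 := by
        rw [Preadditive.comp_neg, hrigid D' hD' D_Z hbD (ξ ≫ a⟦(1 : ℤ)⟧'), neg_zero]
      obtain ⟨m, hm⟩ := Triangle.coyoneda_exact₃ _ (rot_of_distTriang _ hT2) ξ h0
      obtain ⟨n, hn⟩ := hb D' hD' m
      have hm' : ξ = m ≫ c := hm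
      rw [hm', ← hn]
      exact (Category.assoc n b c).trans ((congrArg (n ≫ ·) hbc).trans comp_zero)
    -- first completion : from the W-triangle to the Z₀-triangle
    obtain ⟨q, hq⟩ := hb DX' hDX' (g ≫ u)
    obtain ⟨r₀, hr₁, -⟩ := complete_distinguished_triangle_morphism
      (Triangle.mk f g h).rotate (Triangle.mk a b c).rotate (rot_of_distTriang _ hT1)
      (rot_of_distTriang _ hT2) q u hq.symm
    let rr : X'⟦(1 : ℤ)⟧ ⟶ Y'⟦(1 : ℤ)⟧ := r₀
    have e2 : h ≫ rr = u ≫ c := hr₁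
    -- second completion : from the Z₀-triangle to the W-triangle
    have hbv : (b ≫ v) ≫ h = 0 :=
      cy_zero (CY D_Z X').some (hXZ X' hX' D_Z hbD) ((b ≫ v) ≫ h)
    obtain ⟨q', hq'⟩ := Triangle.coyoneda_exact₃ _ hT1 (b ≫ v) hbv
    obtain ⟨r'₀, hr'₁, -⟩ := complete_distinguished_triangle_morphism
      (Triangle.mk a b c).rotate (Triangle.mk f g h).rotate (rot_of_distTriang _ hT2)
      (rot_of_distTriang _ hT1) q' v hq'
    let rr' : Y'⟦(1 : ℤ)⟧ ⟶ X'⟦(1 : ℤ)⟧ := r'₀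
    have e1 : c ≫ rr' = v ≫ h := hr'₁
    -- the endomorphism rr' ≫ rr of Y'⟦1⟧ is the identity modulo D_Z⟦1⟧
    obtain ⟨D₀, hD₀, s, t, hst⟩ := hQ2
    have htc : t ≫ c = 0 := HomDY1 D₀ hD₀ (t ≫ c)
    have hφ : (Triangle.mk a b c).rotate.mor₂ ≫ (rr' ≫ rr - 𝟙 (Y'⟦(1 : ℤ)⟧)) = 0 := by
      have e4 : (v ≫ u) ≫ c = 𝟙 Z₀ ≫ c := by
        have e3 : (v ≫ u - 𝟙 Z₀) ≫ c = 0 := by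
          rw [← hst, Category.assoc, htc, comp_zero]
        rw [Preadditive.sub_comp] at e3
        exact sub_eq_zero.mp e3
      have e5 : c ≫ (rr' ≫ rr) = c := by
        rw [← Category.assoc, e1, Category.assoc, e2, ← Category.assoc, e4,
          Category.id_comp]
      show c ≫ (rr' ≫ rr - 𝟙 (Y'⟦(1 : ℤ)⟧)) = 0
      rw [Preadditive.comp_sub, e5, Category.comp_id, sub_self]
    obtain ⟨ψ₀, hψ⟩ := Triangle.yoneda_exact₃ _ (rot_of_distTriang _ hT2)
      (rr' ≫ rr - 𝟙 (Y'⟦(1 : ℤ)⟧)) hφ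
    let ψ : D_Z⟦(1 : ℤ)⟧ ⟶ Y'⟦(1 : ℤ)⟧ := ψ₀
    have hψ' : rr' ≫ rr - 𝟙 (Y'⟦(1 : ℤ)⟧) = (-(a⟦(1 : ℤ)⟧')) ≫ ψ := hψ
    -- unshift everything
    let p : X' ⟶ Y' := (shiftFunctor C (1 : ℤ)).preimage rr
    let p' : Y' ⟶ X' := (shiftFunctor C (1 : ℤ)).preimage rr'
    let σ : D_Z ⟶ Y' := (shiftFunctor C (1 : ℤ)).preimage ψ
    have key : p' ≫ p + a ≫ σ = 𝟙 Y' := by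
      apply (shiftFunctor C (1 : ℤ)).map_injective
      rw [CategoryTheory.Functor.map_add, CategoryTheory.Functor.map_comp,
        CategoryTheory.Functor.map_comp, CategoryTheory.Functor.map_id,
        CategoryTheory.Functor.map_preimage, CategoryTheory.Functor.map_preimage,
        CategoryTheory.Functor.map_preimage]
      rw [Preadditive.neg_comp] at hψ'
      rw [sub_eq_iff_eq_add] at hψ'
      rw [hψ']
      abel
    have hY : Y' ∈ X :=
      retract_mem hX (hX.sum hX' (hDX hbD)) (biprod.lift p' a) (biprod.desc p σ)
        (by rw [biprod.lift_desc]; exact key)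
    exact ⟨D_Z, Y'⟦(1 : ℤ)⟧, hbD, ⟨Y', hY, ⟨Iso.refl _⟩⟩, b, c, -(a⟦(1 : ℤ)⟧'),
      rot_of_distTriang _ hT2⟩
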